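/- Let G be a connected bipartite transmission-regular graph of order n, u a vertex of G, and r ≥ 2. The graph rG(u), obtained from r disjoint copies of G by identifying the copies of u into a single vertex, is a ((r−1)(n−1))-STI graph. -/

import Mathlib

/-- The transmission of a vertex: sum of distances to all vertices. -/
noncomputable def Tr {V : Type*} [Fintype V] (G : SimpleGraph V) (u : V) : ℕ :=
  ∑ x : V, G.dist u x

/-- `G` is a `k`-STI graph: transmissions of endpoints of every edge differ by exactly `k`. -/
def IsKSTI {V : Type*} [Fintype V] (G : SimpleGraph V) (k : ℕ) : Prop :=
  ∀ u v : V, G.Adj u v → ((Tr G u : ℤ) - (Tr G v : ℤ)).natAbs = k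

/-- The one-vertex amalgamation of `r` copies of `G` at the vertex `u`:
vertices are the identified vertex together with `r` copies of the other vertices. -/
def amalgam {V : Type*} (G : SimpleGraph V) (u : V) (r : ℕ) :
    SimpleGraph (Unit ⊕ ({x : V // x ≠ u} × Fin r)) where
  Adj a b :=
    match a, b with
    | Sum.inl _, Sum.inl _ => False
    | Sum.inl _, Sum.inr (x, _) => G.Adj u x.1
    | Sum.inr (x, _), Sum.inl _ => G.Adj x.1 u
    | Sum.inr (x, i), Sum.inr (y, j) => i = j ∧ G.Adj x.1 y.1
  symm := by
    refine ⟨?_⟩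
    rintro (a | ⟨x, i⟩) (b | ⟨y, j⟩) h
    · exact h
    · exact h.symm
    · exact h.symm
    · exact ⟨h.1.symm, h.2.symm⟩
  loopless := by
    refine ⟨?_⟩
    rintro (a | ⟨x, i⟩) h
    · exact h
    · exact (G.ne_of_adj h.2) rfl

namespace AmalgamAux

set_option linter.unusedSectionVars false

variable {V : Type*} [DecidableEq V] {G : SimpleGraph V} {u : V} {r : ℕ}

/-- Embedding of the `i`-th copy as a graph homomorphism. -/
def fhom (G : SimpleGraph V) (u : V) (r : ℕ) (i : Fin r) : G →g amalgam G u r where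
  toFun v := if h : v = u then Sum.inl () else Sum.inr (⟨v, h⟩, i)
  map_rel' := by
    intro a b hab
    split_ifs with ha hb hb
    · exact absurd (ha ▸ hb ▸ hab) G.irrefl
    · exact ha ▸ hab
    · exact hb ▸ hab
    · exact ⟨rfl, hab⟩

/-- Projection onto the `i`-th copy. -/
def pmap (u : V) (i : Fin r) : (Unit ⊕ ({x : V // x ≠ u} × Fin r)) → V :=
  Sum.elim (fun _ => u) (fun p => if p.2 = i then p.1.1 else u)

lemma pmap_step (i : Fin r)
    {a b : Unit ⊕ ({x : V // x ≠ u} × Fin r)} (h : (amalgam G u r).Adj a b) :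
    G.dist (pmap u i a) (pmap u i b) ≤ 1 := by
  obtain (a | ⟨x, j⟩) := a <;> obtain (b | ⟨y, k⟩) := b
  · exact absurd h (by simp [amalgam])
  · have h' : G.Adj u y.1 := h
    simp only [pmap, Sum.elim_inl, Sum.elim_inr]
    split_ifs with hk
    · exact le_of_eq (SimpleGraph.dist_eq_one_iff_adj.mpr h')
    · simp [SimpleGraph.dist_self]
  · have h' : G.Adj x.1 u := h
    simp only [pmap, Sum.elim_inl, Sum.elim_inr]
    split_ifs with hk
    · exact le_of_eq (SimpleGraph.dist_eq_one_iff_adj.mpr h')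
    · simp [SimpleGraph.dist_self]
  · obtain ⟨rfl, hadj⟩ : j = k ∧ G.Adj x.1 y.1 := h
    simp only [pmap, Sum.elim_inr]
    split_ifs with hk
    · exact le_of_eq (SimpleGraph.dist_eq_one_iff_adj.mpr hadj)
    · simp [SimpleGraph.dist_self]

lemma pmap_lower (hconn : G.Connected) (i : Fin r)
    {a b : Unit ⊕ ({x : V // x ≠ u} × Fin r)} (p : (amalgam G u r).Walk a b) :
    G.dist (pmap u i a) (pmap u i b) ≤ p.length := by
  induction p with
  | nil => simp
  | cons h q ih =>
    rw [SimpleGraph.Walk.length_cons]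
    calc G.dist (pmap u i _) (pmap u i _)
        ≤ G.dist (pmap u i _) (pmap u i _) + G.dist (pmap u i _) (pmap u i _) :=
          hconn.dist_triangle
      _ ≤ 1 + q.length := Nat.add_le_add (pmap_step i h) ih
      _ = q.length + 1 := Nat.add_comm _ _

lemma fhom_u (i : Fin r) : fhom G u r i u = Sum.inl () := dif_pos rfl

lemma fhom_ne (i : Fin r) (x : {x : V // x ≠ u}) : fhom G u r i x.1 = Sum.inr (x, i) :=
  dif_neg x.2

lemma dist_upper (hconn : G.Connected) (i : Fin r) (x y : V) :
    (amalgam G u r).dist (fhom G u r i x) (fhom G u r i y) ≤ G.dist x y := by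
  obtain ⟨p, hp⟩ := (hconn x y).exists_walk_length_eq_dist
  calc (amalgam G u r).dist _ _ ≤ (p.map (fhom G u r i)).length := SimpleGraph.dist_le _
    _ = G.dist x y := by rw [SimpleGraph.Walk.length_map, hp]

lemma reach (hconn : G.Connected) (i : Fin r) (x y : V) :
    (amalgam G u r).Reachable (fhom G u r i x) (fhom G u r i y) :=
  ⟨((hconn x y).some).map (fhom G u r i)⟩

lemma pmap_inr (i : Fin r) (x : {x : V // x ≠ u}) :
    pmap u i (Sum.inr (x, i)) = x.1 := by simp [pmap]

lemma distA1 (hconn : G.Connected) (i : Fin r) (x : {x : V // x ≠ u}) :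
    (amalgam G u r).dist (Sum.inl ()) (Sum.inr (x, i)) = G.dist u x.1 := by
  refine le_antisymm ?_ ?_
  · have := dist_upper (u := u) hconn i u x.1
    rwa [fhom_u, fhom_ne] at this
  · have hreach : (amalgam G u r).Reachable (Sum.inl ()) (Sum.inr (x, i)) := by
      have := reach (u := u) hconn i u x.1
      rwa [fhom_u, fhom_ne] at this
    obtain ⟨p, hp⟩ := hreach.exists_walk_length_eq_dist
    have := pmap_lower hconn i p
    rwa [hp, pmap_inr] at this

lemma distA2 (hconn : G.Connected) (i : Fin r) (x y : {x : V // x ≠ u}) :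
    (amalgam G u r).dist (Sum.inr (x, i)) (Sum.inr (y, i)) = G.dist x.1 y.1 := by
  refine le_antisymm ?_ ?_
  · have := dist_upper (u := u) hconn i x.1 y.1
    rwa [fhom_ne, fhom_ne] at this
  · have hreach : (amalgam G u r).Reachable (Sum.inr (x, i)) (Sum.inr (y, i)) := by
      have := reach (u := u) hconn i x.1 y.1
      rwa [fhom_ne, fhom_ne] at this
    obtain ⟨p, hp⟩ := hreach.exists_walk_length_eq_dist
    have := pmap_lower hconn i p
    rwa [hp, pmap_inr, pmap_inr] at this

lemma hub_mem {a b : Unit ⊕ ({x : V // x ≠ u} × Fin r)} (p : (amalgam G u r).Walk a b) :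
    ∀ x i y j, a = Sum.inr (x, i) → b = Sum.inr (y, j) → i ≠ j →
      Sum.inl () ∈ p.support := by
  induction p with
  | nil =>
    rintro x i y j rfl hb hij
    simp only [Sum.inr.injEq, Prod.mk.injEq] at hb
    exact absurd hb.2 hij
  | cons h q ih =>
    rintro x i y j rfl rfl hij
    rw [SimpleGraph.Walk.support_cons]
    refine List.mem_cons_of_mem _ ?_
    rename_i c
    obtain (c | ⟨z, k⟩) := c
    · exact q.start_mem_support
    · have hk : i = k := h.1
      exact ih z k y j rfl rfl (hk ▸ hij)

lemma distA3 (hconn : G.Connected) {i j : Fin r} (hij : i ≠ j)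
    (x y : {x : V // x ≠ u}) :
    (amalgam G u r).dist (Sum.inr (x, i)) (Sum.inr (y, j)) = G.dist x.1 u + G.dist u y.1 := by
  classical
  refine le_antisymm ?_ ?_
  · obtain ⟨p, hp⟩ := (hconn x.1 u).exists_walk_length_eq_dist
    obtain ⟨q, hq⟩ := (hconn u y.1).exists_walk_length_eq_dist
    refine (SimpleGraph.dist_le
      (((p.map (fhom G u r i)).copy (fhom_ne i x) (fhom_u i)).append
        ((q.map (fhom G u r j)).copy (fhom_u j) (fhom_ne j y)))).trans ?_
    rw [SimpleGraph.Walk.length_append, SimpleGraph.Walk.length_copy,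
      SimpleGraph.Walk.length_copy, SimpleGraph.Walk.length_map,
      SimpleGraph.Walk.length_map, hp, hq]
  · have hreach : (amalgam G u r).Reachable (Sum.inr (x, i)) (Sum.inr (y, j)) := by
      have h1 : (amalgam G u r).Reachable (Sum.inr (x, i)) (Sum.inl ()) := by
        have := reach (u := u) hconn i x.1 u
        rwa [fhom_u, fhom_ne] at this
      have h2 : (amalgam G u r).Reachable (Sum.inl ()) (Sum.inr (y, j)) := by
        have := reach (u := u) hconn j u y.1
        rwa [fhom_u, fhom_ne] at this
      exact h1.trans h2
    obtain ⟨p, hp⟩ := hreach.exists_walk_length_eq_dist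
    have hmem : Sum.inl () ∈ p.support := hub_mem p x i y j rfl rfl hij
    have hlen : (p.takeUntil _ hmem).length + (p.dropUntil _ hmem).length = p.length := by
      rw [← SimpleGraph.Walk.length_append, p.take_spec hmem]
    have l1 : G.dist x.1 u ≤ (p.takeUntil _ hmem).length := by
      have := pmap_lower hconn i (p.takeUntil _ hmem)
      rwa [pmap_inr] at this
    have l2 : G.dist u y.1 ≤ (p.dropUntil _ hmem).length := by
      have := pmap_lower hconn j (p.dropUntil _ hmem)
      rwa [pmap_inr] at this
    omega

end AmalgamAux

open AmalgamAux in
theorem stmt_19 {V : Type*} [Fintype V] [DecidableEq V] (G : SimpleGraph V) (hconn : G.Connected)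
    (hbip : G.Colorable 2)
    (hreg : ∀ x y : V, Tr G x = Tr G y)
    (u : V) (r : ℕ) (hr : 2 ≤ r) :
    IsKSTI (amalgam G u r) ((r - 1) * (Fintype.card V - 1)) := by
  classical
  set n := Fintype.card V with hn
  set t := Tr G u with ht
  have hsub : ∀ f : V → ℕ, (∑ x : {x : V // x ≠ u}, f x.1)
      = ∑ x ∈ Finset.univ.erase u, f x := by
    intro f
    exact (Finset.sum_subtype _ (fun x => by simp) f).symm
  have key : ∀ w : V, G.dist w u + ∑ x : {x : V // x ≠ u}, G.dist w x.1 = Tr G w := by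
    intro w
    rw [hsub, Tr, Finset.add_sum_erase _ _ (Finset.mem_univ u)]
  have hcard : (Finset.univ.erase u).card = n - 1 := by
    rw [Finset.card_erase_of_mem (Finset.mem_univ u), hn, Finset.card_univ]
  have hcard' : Fintype.card {x : V // x ≠ u} = n - 1 := by
    rw [← hcard, ← Finset.card_univ]
    rw [Finset.card_univ, Fintype.card_subtype]
    congr 1
    ext y
    simp
  have e2 : (∑ y : {x : V // x ≠ u}, G.dist u y.1) = t := by
    have h := key u
    rwa [SimpleGraph.dist_self, zero_add] at h
  -- transmission of the hub
  have TrHub : Tr (amalgam G u r) (Sum.inl ()) = r * t := by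
    rw [Tr, Fintype.sum_sum_type]
    simp only [SimpleGraph.dist_self, Finset.sum_const, smul_zero, Fintype.sum_prod_type]
    rw [zero_add]
    have h1 : ∀ x : {x : V // x ≠ u},
        (∑ i : Fin r, (amalgam G u r).dist (Sum.inl ()) (Sum.inr (x, i)))
        = r * G.dist u x.1 := by
      intro x
      rw [Finset.sum_congr rfl (fun i _ => distA1 hconn i x)]
      simp [mul_comm]
    rw [Finset.sum_congr rfl (fun x _ => h1 x), ← Finset.mul_sum, e2]
  -- transmission of a non-hub vertex
  have TrCopy : ∀ (x : {x : V // x ≠ u}) (i : Fin r),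
      Tr (amalgam G u r) (Sum.inr (x, i))
        = Tr G x.1 + (r - 1) * ((n - 1) * G.dist x.1 u + t) := by
    intro x i
    rw [Tr, Fintype.sum_sum_type]
    have h1 : (∑ _a : Unit, (amalgam G u r).dist (Sum.inr (x, i)) (Sum.inl _a))
        = G.dist x.1 u := by
      simp only [Finset.univ_unique, Finset.sum_singleton]
      rw [SimpleGraph.dist_comm, distA1 hconn i x, SimpleGraph.dist_comm]
    have h2 : ∀ y : {x : V // x ≠ u},
        (∑ j : Fin r, (amalgam G u r).dist (Sum.inr (x, i)) (Sum.inr (y, j)))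
        = G.dist x.1 y.1 + (r - 1) * (G.dist x.1 u + G.dist u y.1) := by
      intro y
      rw [← Finset.add_sum_erase _ _ (Finset.mem_univ i), distA2 hconn i x y]
      congr 1
      rw [Finset.sum_congr rfl (fun j hj => distA3 hconn (Finset.ne_of_mem_erase hj).symm x y)]
      rw [Finset.sum_const, Finset.card_erase_of_mem (Finset.mem_univ i)]
      simp [smul_eq_mul]
    rw [h1, Fintype.sum_prod_type, Finset.sum_congr rfl (fun y _ => h2 y)]
    have hS : (∑ y : {x : V // x ≠ u},
        (G.dist x.1 y.1 + (r - 1) * (G.dist x.1 u + G.dist u y.1)))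
        = (∑ y : {x : V // x ≠ u}, G.dist x.1 y.1)
          + (r - 1) * ((n - 1) * G.dist x.1 u + t) := by
      rw [Finset.sum_add_distrib, ← Finset.mul_sum, Finset.sum_add_distrib, Finset.sum_const,
        e2, Finset.card_univ, hcard', smul_eq_mul]
    rw [hS, ← add_assoc, key x.1]
  -- bipartite parity lemma
  obtain ⟨c⟩ := hbip
  have parity : ∀ {a b : V} (p : G.Walk a b), (c a = c b ↔ Even p.length) := by
    intro a b p
    induction p with
    | nil => simp
    | cons h q ih =>
      have hne : c _ ≠ c _ := c.valid h
      rw [SimpleGraph.Walk.length_cons, Nat.even_add_one, ← ih]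
      constructor
      · intro hac hmid
        exact hne (hac.trans hmid.symm)
      · intro hmid
        have h2 : ∀ p q s : Fin 2, p ≠ q → ¬ (q = s) → p = s := by decide
        exact h2 _ _ _ hne hmid
  have parity_dist : ∀ a b : V, (c a = c b ↔ Even (G.dist a b)) := by
    intro a b
    obtain ⟨p, hp⟩ := (hconn a b).exists_walk_length_eq_dist
    rw [← hp]; exact parity p
  have adj_dist : ∀ {a b : V}, G.Adj a b →
      ((G.dist a u : ℤ) - (G.dist b u : ℤ)).natAbs = 1 := by
    intro a b hab
    have h1 : G.dist a u ≤ G.dist a b + G.dist b u := hconn.dist_triangle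
    have h2 : G.dist b u ≤ G.dist b a + G.dist a u := hconn.dist_triangle
    have hd : G.dist a b = 1 := SimpleGraph.dist_eq_one_iff_adj.mpr hab
    have hd' : G.dist b a = 1 := SimpleGraph.dist_eq_one_iff_adj.mpr hab.symm
    have hne : c a ≠ c b := c.valid hab
    have pa := parity_dist a u
    have pb := parity_dist b u
    have hpar : ¬ (Even (G.dist a u) ↔ Even (G.dist b u)) := by
      intro hiff
      have h3 : ∀ p q s : Fin 2, (p = s ↔ q = s) → p = q := by decide
      exact hne (h3 _ _ _ ((pa.trans hiff).trans pb.symm))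
    rw [Nat.even_iff, Nat.even_iff] at hpar
    omega
  obtain ⟨s, rfl⟩ : ∃ s, r = s + 1 := ⟨r - 1, (Nat.succ_pred_eq_of_pos (by omega)).symm⟩
  simp only [Nat.add_sub_cancel] at TrCopy ⊢
  -- main proof
  rintro (a | ⟨x, i⟩) (b | ⟨y, j⟩) hadj
  · exact absurd hadj (by simp [amalgam])
  · -- hub to copy
    have hA : G.Adj u y.1 := hadj
    have hd : G.dist y.1 u = 1 := SimpleGraph.dist_eq_one_iff_adj.mpr hA.symm
    rw [TrHub, TrCopy y j, (hreg y.1 u : Tr G y.1 = t), hd]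
    have hcast : (((s + 1) * t : ℕ) : ℤ) - ((t + s * ((n - 1) * 1 + t) : ℕ) : ℤ)
        = -((s * (n - 1) : ℕ) : ℤ) := by
      push_cast
      ring
    rw [hcast, Int.natAbs_neg, Int.natAbs_natCast]
  · -- copy to hub
    have hA : G.Adj x.1 u := hadj
    have hd : G.dist x.1 u = 1 := SimpleGraph.dist_eq_one_iff_adj.mpr hA
    rw [TrHub, TrCopy x i, (hreg x.1 u : Tr G x.1 = t), hd]
    have hcast : ((t + s * ((n - 1) * 1 + t) : ℕ) : ℤ) - (((s + 1) * t : ℕ) : ℤ)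
        = ((s * (n - 1) : ℕ) : ℤ) := by
      push_cast
      ring
    rw [hcast, Int.natAbs_natCast]
  · -- copy to copy
    obtain ⟨rfl, hA⟩ : i = j ∧ G.Adj x.1 y.1 := hadj
    have hd := adj_dist hA
    rw [TrCopy x i, TrCopy y i, (hreg x.1 u : Tr G x.1 = t), (hreg y.1 u : Tr G y.1 = t)]
    have hcast : ((t + s * ((n - 1) * G.dist x.1 u + t) : ℕ) : ℤ)
        - ((t + s * ((n - 1) * G.dist y.1 u + t) : ℕ) : ℤ)
        = ((s * (n - 1) : ℕ) : ℤ) * ((G.dist x.1 u : ℤ) - (G.dist y.1 u : ℤ)) := by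
      push_cast
      ring
    rw [hcast, Int.natAbs_mul, hd, Int.natAbs_natCast, mul_one]
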